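/- Let d ≥ 1, 0 < r < 2, and let (c^ε_{j,k}) be a family of reals indexed by j ∈ ℕ, ε in a finite set E, and k in a countable set, with Σ_{j,k,ε} (c^ε_{j,k})² < ∞. Write b_{j,ε} = Σ_k (c^ε_{j,k})². Then sup_{0 < λ ≤ 1} λ^{r−2} Σ_{j,ε} b_{j,ε} 1{b_{j,ε} ≤ 2^{dj} λ²} < ∞ if and only if sup_{0 < λ ≤ 1} λ^r Σ_{j} 2^{dj} Σ_{ε} 1{b_{j,ε} > 2^{dj} λ²} < ∞. -/

import Mathlib

open Set

open scoped ENNReal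

noncomputable section

attribute [local instance] Classical.propDecidable


lemma pr {x : ℝ} (hx : 0 ≤ x) (n : ℕ) (s : ℝ) : (x^n) ^ s = x^((n:ℝ)*s) := by
  rw [← Real.rpow_natCast x n, ← Real.rpow_mul hx]

lemma pr2 (n : ℕ) : ((2:ℝ)^n)^(2:ℕ) = (2:ℝ)^((n:ℝ)*2) := by
  rw [← pow_mul, ← Real.rpow_natCast 2 (n*2)]
  congr 1; push_cast; ring

lemma rp2 (s t : ℝ) : (2:ℝ)^s * (2:ℝ)^t = (2:ℝ)^(s+t) := (Real.rpow_add two_pos s t).symm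

lemma R1 {lam : ℝ} (hl : 0 < lam) (r : ℝ) (m : ℕ) :
    lam^(r-2) * (lam/2^m)^2 * ((lam/2^(m+1))^(-r)) = (2:ℝ)^r * ((2:ℝ)^(r-2))^m := by
  have habc : lam^(r-2) * lam^2 * lam^(-r) = 1 := by
    rw [← Real.rpow_natCast lam 2, ← Real.rpow_add hl, ← Real.rpow_add hl,
      show r - 2 + ((2:ℕ):ℝ) + -r = 0 by push_cast; ring, Real.rpow_zero]
  have e : lam^(r-2) * (lam/2^m)^2 * ((lam/2^(m+1))^(-r))
      = (lam^(r-2) * lam^2 * lam^(-r)) * ((2:ℝ)^((m:ℝ)*2))⁻¹ * (2:ℝ)^(((m+1:ℕ):ℝ)*r) := by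
    rw [div_pow, Real.div_rpow hl.le (by positivity), Real.rpow_neg (x := (2:ℝ)^(m+1)) (by positivity) r,
      pr (by norm_num : (0:ℝ) ≤ 2) (m+1) r, pr2 m]
    have h2 : (2:ℝ)^((m:ℝ)*2) ≠ 0 := (Real.rpow_pos_of_pos two_pos _).ne'
    have h3 : (2:ℝ)^(((m+1:ℕ):ℝ)*r) ≠ 0 := (Real.rpow_pos_of_pos two_pos _).ne'
    field_simp
  rw [e, habc, one_mul, ← Real.rpow_neg (by norm_num : (0:ℝ) ≤ 2), rp2,
    ← Real.rpow_natCast ((2:ℝ)^(r-2)) m, ← Real.rpow_mul (by norm_num : (0:ℝ) ≤ 2), rp2]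
  congr 1; push_cast; ring

lemma R2 {lam : ℝ} (hl : 0 < lam) (r : ℝ) (m : ℕ) :
    lam^r * (((lam*2^m)^2)⁻¹) * ((lam*2^(m+1))^(2-r)) = (2:ℝ)^(2-r) * ((2:ℝ)^(-r))^m := by
  have habc : lam^r * (lam^2)⁻¹ * lam^(2-r) = 1 := by
    rw [← Real.rpow_natCast lam 2, ← Real.rpow_neg hl.le, ← Real.rpow_add hl, ← Real.rpow_add hl,
      show r + -((2:ℕ):ℝ) + (2-r) = 0 by push_cast; ring, Real.rpow_zero]
  have e : lam^r * (((lam*2^m)^2)⁻¹) * ((lam*2^(m+1))^(2-r))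
      = (lam^r * (lam^2)⁻¹ * lam^(2-r)) * ((2:ℝ)^((m:ℝ)*2))⁻¹ * (2:ℝ)^(((m+1:ℕ):ℝ)*(2-r)) := by
    rw [mul_pow, Real.mul_rpow hl.le (by positivity), pr (by norm_num : (0:ℝ) ≤ 2) (m+1) (2-r), pr2 m]
    have h1 : lam^(2:ℕ) ≠ 0 := by positivity
    have h2 : (2:ℝ)^((m:ℝ)*2) ≠ 0 := (Real.rpow_pos_of_pos two_pos _).ne'
    field_simp
  rw [e, habc, one_mul, ← Real.rpow_neg (by norm_num : (0:ℝ) ≤ 2), rp2,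
    ← Real.rpow_natCast ((2:ℝ)^(-r)) m, ← Real.rpow_mul (by norm_num : (0:ℝ) ≤ 2), rp2]
  congr 1; push_cast; ring


-- pointwise lemma for B ⇒ A
lemma pt1 {lam bb A : ℝ} (hl : 0 < lam) (hA : 0 < A) :
    (if bb ≤ A * lam^2 then ENNReal.ofReal bb else 0)
      ≤ ∑' m : ℕ, ENNReal.ofReal ((lam/2^m)^2) *
          (ENNReal.ofReal A * (if A * (lam/2^(m+1))^2 < bb then 1 else 0)) := by
  split_ifs with h
  · rcases le_or_gt bb 0 with hb0 | hb0
    · simp [ENNReal.ofReal_eq_zero.2 hb0]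
    · have hex : ∃ m : ℕ, A * (lam/2^(m+1))^2 < bb := by
        obtain ⟨n, hn⟩ := exists_pow_lt_of_lt_one
          (div_pos hb0 (mul_pos hA (by positivity : (0:ℝ) < lam^2)))
          (by norm_num : (1:ℝ)/2 < 1)
        refine ⟨n, ?_⟩
        have hpow : (2:ℝ)^n ≤ ((2:ℝ)^(n+1))^2 := by
          rw [← pow_mul]
          exact pow_le_pow_right₀ (by norm_num) (by omega)
        have h1 : (lam/2^(n+1))^2 ≤ lam^2 * ((1:ℝ)/2)^n := by
          rw [div_pow, one_div, inv_pow, ← div_eq_mul_inv]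
          exact div_le_div_of_nonneg_left (sq_nonneg lam) (by positivity) hpow
        have h2 : lam^2 * ((1:ℝ)/2)^n * A < bb := by
          rw [lt_div_iff₀ (by positivity)] at hn
          nlinarith
        nlinarith [mul_le_mul_of_nonneg_left h1 hA.le]
      obtain ⟨m₀, hm₀, hmin⟩ : ∃ m, (A * (lam/2^(m+1))^2 < bb) ∧
          ∀ k < m, ¬(A * (lam/2^(k+1))^2 < bb) :=
        ⟨Nat.find hex, Nat.find_spec hex, fun k hk => Nat.find_min hex hk⟩
      have hub : bb ≤ A * (lam/2^m₀)^2 := by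
        rcases m₀ with _ | n
        · simpa using h
        · have := hmin n n.lt_succ_self
          push_neg at this
          exact this
      calc ENNReal.ofReal bb ≤ ENNReal.ofReal (A * (lam/2^m₀)^2) := ENNReal.ofReal_le_ofReal hub
        _ = ENNReal.ofReal ((lam/2^m₀)^2) * (ENNReal.ofReal A *
              (if A * (lam/2^(m₀+1))^2 < bb then 1 else 0)) := by
            rw [if_pos hm₀, mul_one, ← ENNReal.ofReal_mul (by positivity), mul_comm]
        _ ≤ _ := ENNReal.le_tsum m₀
  · simp

-- pointwise lemma for A ⇒ B
lemma pt2 {lam bb A : ℝ} (hl : 0 < lam) (hl1 : lam ≤ 1) (hA : 1 ≤ A) :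
    ENNReal.ofReal A * (if A * lam^2 < bb then 1 else 0)
      ≤ ENNReal.ofReal bb + ∑' m : ℕ, ENNReal.ofReal (((lam*2^m)^2)⁻¹) *
          (if bb ≤ A * (min (lam*2^(m+1)) 1)^2 then ENNReal.ofReal bb else 0) := by
  have hA0 : (0:ℝ) < A := lt_of_lt_of_le one_pos hA
  split_ifs with h
  · rw [mul_one]
    rcases lt_or_ge A bb with hAb | hbA
    · exact le_add_right (ENNReal.ofReal_le_ofReal hAb.le)
    · have hex : ∃ m : ℕ, bb ≤ A * (lam*2^(m+1))^2 := by
        obtain ⟨n, hn⟩ := pow_unbounded_of_one_lt (bb/lam^2) (by norm_num : (1:ℝ) < 4)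
        refine ⟨n, ?_⟩
        have hlt : bb < lam^2 * 4^n := by
          rw [div_lt_iff₀ (by positivity)] at hn; linarith
        have h4 : ((2:ℝ)^(n+1))^2 = 4^n * 4 := by
          rw [← pow_mul, ← pow_succ, show (4:ℝ) = 2^2 by norm_num, ← pow_mul]
          congr 1; omega
        have h5 : (lam*2^(n+1))^2 = lam^2 * (4^n*4) := by rw [mul_pow, h4]
        nlinarith [pow_pos (by norm_num : (0:ℝ) < 4) n, sq_nonneg lam]
      obtain ⟨m₀, hup, hmin⟩ : ∃ m, (bb ≤ A * (lam*2^(m+1))^2) ∧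
          ∀ k < m, ¬(bb ≤ A * (lam*2^(k+1))^2) :=
        ⟨Nat.find hex, Nat.find_spec hex, fun k hk => Nat.find_min hex hk⟩
      have hlow : A * (lam*2^m₀)^2 < bb := by
        rcases m₀ with _ | n
        · simpa using h
        · have := hmin n n.lt_succ_self
          push_neg at this
          exact this
      have hcond : bb ≤ A * (min (lam*2^(m₀+1)) 1)^2 := by
        rcases le_total (lam*2^(m₀+1)) 1 with hc | hc
        · rwa [min_eq_left hc]
        · rw [min_eq_right hc]; simpa using hbA
      have hkey : A ≤ ((lam*2^m₀)^2)⁻¹ * bb := by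
        rw [← div_eq_inv_mul, le_div_iff₀ (by positivity)]
        linarith [hlow]
      refine le_add_left ?_
      calc ENNReal.ofReal A ≤ ENNReal.ofReal (((lam*2^m₀)^2)⁻¹ * bb) :=
            ENNReal.ofReal_le_ofReal hkey
        _ = ENNReal.ofReal (((lam*2^m₀)^2)⁻¹) *
              (if bb ≤ A * (min (lam*2^(m₀+1)) 1)^2 then ENNReal.ofReal bb else 0) := by
            rw [if_pos hcond, ENNReal.ofReal_mul (by positivity)]
        _ ≤ _ := ENNReal.le_tsum m₀
  · simp


lemma swap3 {E : Type} [Fintype E] (f : ℕ → ℕ → E → ℝ≥0∞) :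
    ∑' j : ℕ, ∑ ε : E, ∑' m : ℕ, f m j ε = ∑' m : ℕ, ∑' j : ℕ, ∑ ε : E, f m j ε := by
  have h1 : ∀ j, ∑ ε : E, ∑' m : ℕ, f m j ε = ∑' m : ℕ, ∑ ε : E, f m j ε := by
    intro j
    rw [← tsum_fintype (L := .unconditional _), ENNReal.tsum_comm]
    exact tsum_congr fun m => tsum_fintype _
  rw [tsum_congr h1, ENNReal.tsum_comm]

lemma geom_ne_top {x y : ℝ} (hx0 : 0 ≤ x) (hx1 : x < 1) {C : ℝ≥0∞} (hC : C ≠ ⊤) (hy : 0 ≤ y) :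
    (∑' m : ℕ, ENNReal.ofReal (y * x^m) * C) ≠ ⊤ := by
  have h1 : ∀ m : ℕ, ENNReal.ofReal (y*x^m) * C = (ENNReal.ofReal y * C) * (ENNReal.ofReal x)^m := by
    intro m; rw [ENNReal.ofReal_mul hy, ENNReal.ofReal_pow hx0]; ring
  rw [tsum_congr h1, ENNReal.tsum_mul_left, ENNReal.tsum_geometric]
  have hxlt : ENNReal.ofReal x < 1 := by
    rwa [← ENNReal.ofReal_one, ENNReal.ofReal_lt_ofReal_iff one_pos]
  refine ENNReal.mul_ne_top (ENNReal.mul_ne_top ENNReal.ofReal_ne_top hC) ?_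
  exact ENNReal.inv_ne_top.mpr (by simp [tsub_eq_zero_iff_le, hxlt.not_ge])

example : (1:ℝ) ≤ (2:ℝ)^(3:ℕ) := one_le_pow₀ (by norm_num)

lemma main_equiv (d : ℕ) (r : ℝ) (hr0 : 0 < r) (hr2 : r < 2)
    (E : Type) [Fintype E] (b : ℕ → E → ℝ)
    (hS : (∑' j : ℕ, ∑ ε : E, ENNReal.ofReal (b j ε)) ≠ ⊤) :
    ((⨆ lam ∈ Set.Ioc (0 : ℝ) 1, ENNReal.ofReal (lam ^ (r - 2)) *
        ∑' j : ℕ, ∑ ε : E,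
          (if b j ε ≤ (2 : ℝ) ^ (d * j) * lam ^ 2
            then ENNReal.ofReal (b j ε) else 0)) < ⊤)
    ↔ ((⨆ lam ∈ Set.Ioc (0 : ℝ) 1, ENNReal.ofReal (lam ^ r) *
        ∑' j : ℕ, (2 : ℝ≥0∞) ^ (d * j) * ∑ ε : E,
          (if (2 : ℝ) ^ (d * j) * lam ^ 2 < b j ε
            then (1 : ℝ≥0∞) else 0)) < ⊤) := by
  set F : ℝ → ℝ≥0∞ := fun lam => ∑' j : ℕ, ∑ ε : E,
    (if b j ε ≤ (2 : ℝ) ^ (d * j) * lam ^ 2 then ENNReal.ofReal (b j ε) else 0) with hF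
  set G : ℝ → ℝ≥0∞ := fun lam => ∑' j : ℕ, ∑ ε : E,
    ENNReal.ofReal ((2:ℝ) ^ (d * j)) *
      (if (2 : ℝ) ^ (d * j) * lam ^ 2 < b j ε then (1 : ℝ≥0∞) else 0) with hG
  have h2A : ∀ j : ℕ, ((2:ℝ≥0∞)) ^ (d*j) = ENNReal.ofReal ((2:ℝ) ^ (d*j)) := by
    intro j
    rw [ENNReal.ofReal_pow (by norm_num : (0:ℝ) ≤ 2)]
    norm_num
  have hGeq : ∀ lam : ℝ, (∑' j : ℕ, (2 : ℝ≥0∞) ^ (d * j) * ∑ ε : E,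
      (if (2 : ℝ) ^ (d * j) * lam ^ 2 < b j ε then (1 : ℝ≥0∞) else 0)) = G lam := by
    intro lam
    exact tsum_congr fun j => by rw [h2A, Finset.mul_sum]
  have hApos : ∀ j : ℕ, (0:ℝ) < (2:ℝ) ^ (d*j) := fun j => by positivity
  have hA1 : ∀ j : ℕ, (1:ℝ) ≤ (2:ℝ) ^ (d*j) := fun j => one_le_pow₀ (by norm_num)
  constructor
  · -- A ⇒ B
    intro hA
    set C := (⨆ lam ∈ Set.Ioc (0 : ℝ) 1, ENNReal.ofReal (lam ^ (r - 2)) * F lam) with hCdef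
    have hC : C ≠ ⊤ := hA.ne
    have hCle : ∀ μ ∈ Set.Ioc (0:ℝ) 1, ENNReal.ofReal (μ ^ (r-2)) * F μ ≤ C := by
      intro μ hμ
      exact le_biSup (fun lam => ENNReal.ofReal (lam ^ (r-2)) * F lam) hμ
    set S := (∑' j : ℕ, ∑ ε : E, ENNReal.ofReal (b j ε)) with hSdef
    -- per-lam bound
    have key : ∀ lam ∈ Set.Ioc (0:ℝ) 1, ENNReal.ofReal (lam ^ r) *
        (∑' j : ℕ, (2 : ℝ≥0∞) ^ (d * j) * ∑ ε : E,
          (if (2 : ℝ) ^ (d * j) * lam ^ 2 < b j ε then (1 : ℝ≥0∞) else 0))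
        ≤ S + ∑' m : ℕ, ENNReal.ofReal ((2:ℝ)^(2-r) * ((2:ℝ)^(-r))^m) * C := by
      intro lam hlam
      obtain ⟨hl, hl1⟩ := hlam
      rw [hGeq]
      -- G lam ≤ S + ∑' m, c_m * F μ_m
      have step1 : G lam ≤ S + ∑' m : ℕ, ENNReal.ofReal (((lam*2^m)^2)⁻¹) *
          F (min (lam*2^(m+1)) 1) := by
        have hpt : G lam ≤ ∑' j : ℕ, ∑ ε : E, (ENNReal.ofReal (b j ε) +
            ∑' m : ℕ, ENNReal.ofReal (((lam*2^m)^2)⁻¹) *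
              (if b j ε ≤ (2:ℝ)^(d*j) * (min (lam*2^(m+1)) 1)^2
                then ENNReal.ofReal (b j ε) else 0)) :=
          ENNReal.tsum_le_tsum fun j => Finset.sum_le_sum fun ε _ => pt2 hl hl1 (hA1 j)
        refine hpt.trans (le_of_eq ?_)
        rw [tsum_congr fun j => Finset.sum_add_distrib, ENNReal.tsum_add]
        congr 1
        rw [swap3 (f := fun m j ε => ENNReal.ofReal (((lam*2^m)^2)⁻¹) *
          (if b j ε ≤ (2:ℝ)^(d*j) * (min (lam*2^(m+1)) 1)^2
            then ENNReal.ofReal (b j ε) else 0))]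
        refine tsum_congr fun m => ?_
        rw [hF]
        simp only
        rw [← ENNReal.tsum_mul_left]
        exact tsum_congr fun j => (Finset.mul_sum _ _ _).symm
      -- multiply by lam^r
      have hlr1 : ENNReal.ofReal (lam ^ r) ≤ 1 :=
        ENNReal.ofReal_le_one.2 (Real.rpow_le_one hl.le hl1 hr0.le)
      calc ENNReal.ofReal (lam ^ r) * G lam
          ≤ ENNReal.ofReal (lam ^ r) * (S + ∑' m : ℕ, ENNReal.ofReal (((lam*2^m)^2)⁻¹) *
              F (min (lam*2^(m+1)) 1)) := mul_le_mul_right step1 _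
        _ = ENNReal.ofReal (lam ^ r) * S + ∑' m : ℕ, ENNReal.ofReal (lam ^ r) *
              (ENNReal.ofReal (((lam*2^m)^2)⁻¹) * F (min (lam*2^(m+1)) 1)) := by
            rw [mul_add, ENNReal.tsum_mul_left]
        _ ≤ S + ∑' m : ℕ, ENNReal.ofReal ((2:ℝ)^(2-r) * ((2:ℝ)^(-r))^m) * C := by
            refine add_le_add (mul_le_of_le_one_left zero_le hlr1)
              (ENNReal.tsum_le_tsum fun m => ?_)
            · -- per-m bound
              set μ := min (lam*2^(m+1)) 1 with hμdef
              have hμ0 : 0 < μ := lt_min (by positivity) one_pos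
              have hμ1 : μ ≤ 1 := min_le_right _ _
              have hFle : F μ ≤ ENNReal.ofReal (μ^(2-r)) * C := by
                have h1 := hCle μ ⟨hμ0, hμ1⟩
                have h2 : ENNReal.ofReal (μ^(2-r)) * (ENNReal.ofReal (μ^(r-2)) * F μ)
                    = F μ := by
                  rw [← mul_assoc, ← ENNReal.ofReal_mul (by positivity),
                    ← Real.rpow_add hμ0, show (2-r) + (r-2) = 0 by ring,
                    Real.rpow_zero, ENNReal.ofReal_one, one_mul]
                calc F μ = ENNReal.ofReal (μ^(2-r)) * (ENNReal.ofReal (μ^(r-2)) * F μ) :=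
                      h2.symm
                  _ ≤ ENNReal.ofReal (μ^(2-r)) * C := mul_le_mul_right h1 _
              have hμle : μ^(2-r) ≤ (lam*2^(m+1))^(2-r) :=
                Real.rpow_le_rpow hμ0.le (min_le_left _ _) (by linarith)
              calc ENNReal.ofReal (lam ^ r) * (ENNReal.ofReal (((lam*2^m)^2)⁻¹) * F μ)
                  ≤ ENNReal.ofReal (lam ^ r) * (ENNReal.ofReal (((lam*2^m)^2)⁻¹) *
                      (ENNReal.ofReal ((lam*2^(m+1))^(2-r)) * C)) := by
                    gcongr
                    exact hFle.trans (mul_le_mul_left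
                      (ENNReal.ofReal_le_ofReal hμle) _)
                _ = ENNReal.ofReal (lam^r * ((lam*2^m)^2)⁻¹ * (lam*2^(m+1))^(2-r)) * C := by
                    rw [ENNReal.ofReal_mul (by positivity), ENNReal.ofReal_mul (by positivity)]
                    ring
                _ = ENNReal.ofReal ((2:ℝ)^(2-r) * ((2:ℝ)^(-r))^m) * C := by
                    rw [R2 hl r m]
    -- conclude
    have hD : (S + ∑' m : ℕ, ENNReal.ofReal ((2:ℝ)^(2-r) * ((2:ℝ)^(-r))^m) * C) ≠ ⊤ := by
      refine ENNReal.add_ne_top.2 ⟨hS, ?_⟩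
      refine geom_ne_top (Real.rpow_nonneg (by norm_num) _) ?_ hC
        (Real.rpow_nonneg (by norm_num) _)
      exact Real.rpow_lt_one_of_one_lt_of_neg (by norm_num) (by linarith)
    exact lt_of_le_of_lt (iSup₂_le key) (lt_top_iff_ne_top.2 hD)
  · -- B ⇒ A
    intro hB
    set C := (⨆ lam ∈ Set.Ioc (0 : ℝ) 1, ENNReal.ofReal (lam ^ r) *
        ∑' j : ℕ, (2 : ℝ≥0∞) ^ (d * j) * ∑ ε : E,
          (if (2 : ℝ) ^ (d * j) * lam ^ 2 < b j ε then (1 : ℝ≥0∞) else 0)) with hCdef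
    have hC : C ≠ ⊤ := hB.ne
    have hCle : ∀ μ ∈ Set.Ioc (0:ℝ) 1, ENNReal.ofReal (μ ^ r) * G μ ≤ C := by
      intro μ hμ
      rw [← hGeq]
      exact le_biSup (fun lam => ENNReal.ofReal (lam ^ r) *
        ∑' j : ℕ, (2 : ℝ≥0∞) ^ (d * j) * ∑ ε : E,
          (if (2 : ℝ) ^ (d * j) * lam ^ 2 < b j ε then (1 : ℝ≥0∞) else 0)) hμ
    have key : ∀ lam ∈ Set.Ioc (0:ℝ) 1, ENNReal.ofReal (lam ^ (r-2)) * F lam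
        ≤ ∑' m : ℕ, ENNReal.ofReal ((2:ℝ)^r * ((2:ℝ)^(r-2))^m) * C := by
      intro lam hlam
      obtain ⟨hl, hl1⟩ := hlam
      have step1 : F lam ≤ ∑' m : ℕ, ENNReal.ofReal ((lam/2^m)^2) * G (lam/2^(m+1)) := by
        have hpt : F lam ≤ ∑' j : ℕ, ∑ ε : E, ∑' m : ℕ,
            ENNReal.ofReal ((lam/2^m)^2) * (ENNReal.ofReal ((2:ℝ)^(d*j)) *
              (if (2:ℝ)^(d*j) * (lam/2^(m+1))^2 < b j ε then 1 else 0)) :=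
          ENNReal.tsum_le_tsum fun j => Finset.sum_le_sum fun ε _ => pt1 hl (hApos j)
        refine hpt.trans (le_of_eq ?_)
        rw [swap3]
        refine tsum_congr fun m => ?_
        rw [hG]
        simp only
        rw [← ENNReal.tsum_mul_left]
        refine tsum_congr fun j => ?_
        rw [Finset.mul_sum]
      calc ENNReal.ofReal (lam ^ (r-2)) * F lam
          ≤ ∑' m : ℕ, ENNReal.ofReal (lam ^ (r-2)) *
              (ENNReal.ofReal ((lam/2^m)^2) * G (lam/2^(m+1))) := by
            rw [ENNReal.tsum_mul_left]
            exact mul_le_mul_right step1 _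
        _ ≤ ∑' m : ℕ, ENNReal.ofReal ((2:ℝ)^r * ((2:ℝ)^(r-2))^m) * C := by
            refine ENNReal.tsum_le_tsum fun m => ?_
            set μ := lam/2^(m+1) with hμdef
            have hμ0 : 0 < μ := by positivity
            have hμ1 : μ ≤ 1 := by
              rw [hμdef]
              calc lam/2^(m+1) ≤ lam/1 := by
                    gcongr
                    exact one_le_pow₀ (by norm_num)
                _ = lam := div_one lam
                _ ≤ 1 := hl1
            have hGle : G μ ≤ ENNReal.ofReal (μ^(-r)) * C := by
              have h1 := hCle μ ⟨hμ0, hμ1⟩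
              have h2 : ENNReal.ofReal (μ^(-r)) * (ENNReal.ofReal (μ^r) * G μ) = G μ := by
                rw [← mul_assoc, ← ENNReal.ofReal_mul (by positivity),
                  ← Real.rpow_add hμ0, show (-r) + r = 0 by ring,
                  Real.rpow_zero, ENNReal.ofReal_one, one_mul]
              calc G μ = ENNReal.ofReal (μ^(-r)) * (ENNReal.ofReal (μ^r) * G μ) := h2.symm
                _ ≤ ENNReal.ofReal (μ^(-r)) * C := mul_le_mul_right h1 _
            calc ENNReal.ofReal (lam ^ (r-2)) * (ENNReal.ofReal ((lam/2^m)^2) * G μ)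
                ≤ ENNReal.ofReal (lam ^ (r-2)) * (ENNReal.ofReal ((lam/2^m)^2) *
                    (ENNReal.ofReal (μ^(-r)) * C)) := by gcongr
              _ = ENNReal.ofReal (lam^(r-2) * (lam/2^m)^2 * μ^(-r)) * C := by
                  rw [ENNReal.ofReal_mul (by positivity), ENNReal.ofReal_mul (by positivity)]
                  ring
              _ = ENNReal.ofReal ((2:ℝ)^r * ((2:ℝ)^(r-2))^m) * C := by
                  rw [hμdef, R1 hl r m]
    have hD : (∑' m : ℕ, ENNReal.ofReal ((2:ℝ)^r * ((2:ℝ)^(r-2))^m) * C) ≠ ⊤ := by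
      refine geom_ne_top (Real.rpow_nonneg (by norm_num) _) ?_ hC
        (Real.rpow_nonneg (by norm_num) _)
      exact Real.rpow_lt_one_of_one_lt_of_neg (by norm_num) (by linarith)
    exact lt_of_le_of_lt (iSup₂_le key) (lt_top_iff_ne_top.2 hD)

/-- equivalence of the two defining conditions of the global weak Besov
space `W_G(r)` for an arbitrary square-summable coefficient array organized into
level-blocks `b_{j,ε} = Σ_k (c^ε_{j,k})²`. -/
theorem weakG_conditions_equiv
    (d : ℕ) (hd : 1 ≤ d) (r : ℝ) (hr0 : 0 < r) (hr2 : r < 2)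
    (E : Type) [Fintype E] (K : Type) [Countable K]
    (c : ℕ → K → E → ℝ)
    (hsum : Summable fun p : ℕ × K × E => (c p.1 p.2.1 p.2.2) ^ 2) :
    ((⨆ lam ∈ Set.Ioc (0 : ℝ) 1, ENNReal.ofReal (lam ^ (r - 2)) *
        ∑' j : ℕ, ∑ ε : E,
          (if (∑' k : K, (c j k ε) ^ 2) ≤ (2 : ℝ) ^ (d * j) * lam ^ 2
            then ENNReal.ofReal (∑' k : K, (c j k ε) ^ 2) else 0)) < ⊤)
    ↔ ((⨆ lam ∈ Set.Ioc (0 : ℝ) 1, ENNReal.ofReal (lam ^ r) *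
        ∑' j : ℕ, (2 : ℝ≥0∞) ^ (d * j) * ∑ ε : E,
          (if (2 : ℝ) ^ (d * j) * lam ^ 2 < ∑' k : K, (c j k ε) ^ 2
            then (1 : ℝ≥0∞) else 0)) < ⊤) := by
  have hfib : ∀ (j : ℕ) (ε : E), Summable fun k : K => (c j k ε)^2 := by
    intro j ε
    exact hsum.comp_injective (i := fun k => (j, k, ε))
      (fun k1 k2 h => by simpa using (Prod.ext_iff.1 h).2)
  have hS : (∑' j : ℕ, ∑ ε : E, ENNReal.ofReal (∑' k : K, (c j k ε)^2)) ≠ ⊤ := by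
    have h2 : (∑' j : ℕ, ∑ ε : E, ENNReal.ofReal (∑' k : K, (c j k ε)^2))
        = ENNReal.ofReal (∑' p : ℕ × K × E, (c p.1 p.2.1 p.2.2)^2) := by
      calc (∑' j : ℕ, ∑ ε : E, ENNReal.ofReal (∑' k : K, (c j k ε)^2))
          = ∑' j : ℕ, ∑' ε : E, ∑' k : K, ENNReal.ofReal ((c j k ε)^2) := by
            refine tsum_congr fun j => ?_
            rw [← tsum_fintype (L := .unconditional _)]
            exact tsum_congr fun ε =>
              ENNReal.ofReal_tsum_of_nonneg (fun k => sq_nonneg _) (hfib j ε)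
        _ = ∑' j : ℕ, ∑' k : K, ∑' ε : E, ENNReal.ofReal ((c j k ε)^2) :=
            tsum_congr fun j => ENNReal.tsum_comm
        _ = ∑' p : ℕ × K × E, ENNReal.ofReal ((c p.1 p.2.1 p.2.2)^2) := by
            exact ((ENNReal.tsum_prod
              (f := fun (j:ℕ) (q : K × E) => ENNReal.ofReal ((c j q.1 q.2)^2))).trans
              (tsum_congr fun j => ENNReal.tsum_prod
                (f := fun (k:K) (ε:E) => ENNReal.ofReal ((c j k ε)^2)))).symm
        _ = ENNReal.ofReal (∑' p : ℕ × K × E, (c p.1 p.2.1 p.2.2)^2) :=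
            (ENNReal.ofReal_tsum_of_nonneg (fun p => sq_nonneg _) hsum).symm
    rw [h2]
    exact ENNReal.ofReal_ne_top
  exact main_equiv d r hr0 hr2 E (fun j ε => ∑' k : K, (c j k ε)^2) hS
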